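/- Let {X_n; n ≥ 1} be i.i.d. real-valued random variables with E[|X₁|^p] < ∞, where 0 < p < 1, and S_n = X₁ + ⋯ + X_n. Then ∑_{n=1}^∞ (1/n)(|S_n|/n^{1/p}) < ∞ almost surely. -/

import Mathlib

open MeasureTheory ProbabilityTheory
open Finset


/-- MVT step: `(x+1)^(-(1+r)) ≤ (1/r) * (x^(-r) - (x+1)^(-r))` for `x ≥ 1`, `r > 0`. -/
lemma step1 (r : ℝ) (hr : 0 < r) (x : ℝ) (hx : 1 ≤ x) :
    (x + 1) ^ (-(1 + r)) ≤ (1 / r) * (x ^ (-r) - (x + 1) ^ (-r)) := by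
  have hx0 : (0:ℝ) < x := lt_of_lt_of_le one_pos hx
  have hlt : x < x + 1 := by linarith
  obtain ⟨c, hc, hceq⟩ := exists_hasDerivAt_eq_slope (fun y => y ^ (-r))
      (fun y => (-r) * y ^ (-r - 1)) hlt
      (by
        apply ContinuousOn.rpow_const continuousOn_id
        intro y hy
        refine Or.inl ?_
        intro h0
        simp only [id_eq] at h0
        rcases hy with ⟨hy1, _⟩
        nlinarith)
      (by
        intro y hy
        exact Real.hasDerivAt_rpow_const (Or.inl (by rcases hy with ⟨hy1, _⟩; nlinarith)))
  have hc0 : 0 < c := lt_trans hx0 hc.1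
  have hc1 : c ≤ x + 1 := le_of_lt hc.2
  have h2 : x ^ (-r) - (x+1) ^ (-r) = r * c ^ (-r - 1) := by
    have he : (x + 1 - x) = 1 := by ring
    rw [he, div_one] at hceq
    linarith
  have h3 : (x + 1) ^ (-r - 1) ≤ c ^ (-r - 1) :=
    Real.rpow_le_rpow_of_nonpos hc0 hc1 (by linarith)
  have h4 : (x+1) ^ (-(1+r)) = (x+1) ^ (-r - 1) := by rw [show -(1+r) = -r-1 by ring]
  rw [h2, h4]
  calc (x+1) ^ (-r-1) ≤ c ^ (-r-1) := h3
    _ = 1/r * (r * c ^ (-r-1)) := by field_simp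

lemma tail_partial (r : ℝ) (hr : 0 < r) (m : ℕ) (N : ℕ) :
    ∑ k ∈ range N, ((m:ℝ) + k + 1) ^ (-(1 + r)) ≤ (1 + 1/r) * ((m:ℝ) + 1) ^ (-r) := by
  have hb : (0:ℝ) ≤ ((m:ℝ) + 1) ^ (-r) := Real.rpow_nonneg (by positivity) _
  induction N with
  | zero => simp only [range_zero, sum_empty]; positivity
  | succ N _ =>
    rw [Finset.sum_range_succ']
    push_cast
    have h0 : ((m:ℝ) + 0 + 1) ^ (-(1+r)) ≤ ((m:ℝ) + 1) ^ (-r) := by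
      rw [add_zero]
      refine Real.rpow_le_rpow_of_exponent_le ?_ (by linarith)
      have : (0:ℝ) ≤ (m:ℝ) := Nat.cast_nonneg m
      linarith
    have h1 : ∑ k ∈ range N, ((m:ℝ) + (k+1) + 1) ^ (-(1+r)) ≤ (1/r) * ((m:ℝ) + 1) ^ (-r) := by
      have tele := Finset.sum_range_sub' (fun k => (1/r) * ((m:ℝ) + k + 1) ^ (-r)) N
      push_cast at tele
      have hle : ∀ k ∈ range N, ((m:ℝ) + (k+1) + 1) ^ (-(1+r)) ≤
          (1/r) * ((m:ℝ) + k + 1) ^ (-r) - (1/r) * ((m:ℝ) + (k+1) + 1) ^ (-r) := by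
        intro k _
        have h := step1 r hr ((m:ℝ) + k + 1) (by have h1 := Nat.cast_nonneg (α := ℝ) m; have h2 := Nat.cast_nonneg (α := ℝ) k; linarith)
        rw [mul_sub] at h
        convert h using 3 <;> ring
      calc ∑ k ∈ range N, ((m:ℝ) + (k+1) + 1) ^ (-(1+r))
          ≤ ∑ k ∈ range N, ((1/r) * ((m:ℝ) + k + 1) ^ (-r)
              - (1/r) * ((m:ℝ) + (k+1) + 1) ^ (-r)) := Finset.sum_le_sum hle
        _ = (1/r) * ((m:ℝ) + 0 + 1) ^ (-r) - (1/r) * ((m:ℝ) + N + 1) ^ (-r) := tele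
        _ ≤ (1/r) * ((m:ℝ) + 1) ^ (-r) := by
            rw [add_zero]
            have : (0:ℝ) ≤ (1/r) * ((m:ℝ) + N + 1) ^ (-r) := by positivity
            linarith
    push_cast at h0 h1
    calc ∑ k ∈ range N, ((m:ℝ) + (k+1) + 1) ^ (-(1+r)) + ((m:ℝ) + 0 + 1) ^ (-(1+r))
        ≤ (1/r) * ((m:ℝ) + 1) ^ (-r) + ((m:ℝ) + 1) ^ (-r) := by linarith
      _ = (1 + 1/r) * ((m:ℝ) + 1) ^ (-r) := by ring

lemma tail_summable (r : ℝ) (hr : 0 < r) (m : ℕ) :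
    Summable (fun k : ℕ => ((m:ℝ) + k + 1) ^ (-(1 + r))) :=
  summable_of_sum_range_le (fun n => Real.rpow_nonneg (by positivity) _)
    (tail_partial r hr m)

lemma tail_tsum_le (r : ℝ) (hr : 0 < r) (m : ℕ) :
    ∑' k : ℕ, ((m:ℝ) + k + 1) ^ (-(1 + r)) ≤ (1 + 1/r) * ((m:ℝ) + 1) ^ (-r) :=
  Real.tsum_le_of_sum_range_le (fun n => Real.rpow_nonneg (by positivity) _)
    (tail_partial r hr m)

/-- Deterministic step: if `∑ aᵢ/(i+1)^q < ∞` with `aᵢ ≥ 0` and `q > 1`, then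
`∑ (1/(n+1)) * ((a₀+⋯+aₙ)/(n+1)^q) < ∞`. -/
lemma det_lemma (q : ℝ) (hq : 1 < q) (a : ℕ → ℝ) (ha : ∀ i, 0 ≤ a i)
    (h : Summable fun i : ℕ => a i / ((i:ℝ) + 1) ^ q) :
    Summable (fun n : ℕ =>
      (1 / ((n : ℝ) + 1)) * ((∑ i ∈ range (n + 1), a i) / ((n : ℝ) + 1) ^ q)) := by
  have hq0 : 0 < q := lt_trans one_pos hq
  set f : ℕ × ℕ → ℝ := fun ik => a ik.1 * ((ik.1 : ℝ) + ik.2 + 1) ^ (-(1 + q)) with hf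
  have hf0 : ∀ u, 0 ≤ f u := fun u => mul_nonneg (ha _) (Real.rpow_nonneg (by positivity) _)
  have hsf : Summable f := by
    rw [summable_prod_of_nonneg hf0]
    constructor
    · intro i
      exact (tail_summable q hq0 i).mul_left (a i)
    · have hmaj : Summable fun i : ℕ => (1 + 1/q) * (a i * ((i:ℝ) + 1) ^ (-q)) := by
        apply (h.mul_left (1 + 1/q)).congr
        intro i
        rw [Real.rpow_neg (by positivity), div_eq_mul_inv]
        ring
      apply Summable.of_nonneg_of_le (fun i => tsum_nonneg fun k => hf0 (i, k)) _ hmaj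
      intro i
      calc ∑' k, f (i, k) = a i * ∑' k : ℕ, ((i:ℝ) + k + 1) ^ (-(1+q)) := by
            simp only [hf]
            exact tsum_mul_left
        _ ≤ a i * ((1 + 1/q) * ((i:ℝ) + 1) ^ (-q)) :=
            mul_le_mul_of_nonneg_left (tail_tsum_le q hq0 i) (ha i)
        _ = (1 + 1/q) * (a i * ((i:ℝ) + 1) ^ (-q)) := by ring
  -- transport to the (n, i) indexing
  set g : ℕ × ℕ → ℝ := fun ni =>
    if ni.2 ≤ ni.1 then a ni.2 * ((ni.1 : ℝ) + 1) ^ (-(1 + q)) else 0 with hg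
  have hφ : Function.Injective (fun ik : ℕ × ℕ => (ik.1 + ik.2, ik.1)) := by
    rintro ⟨i, k⟩ ⟨i', k'⟩ hh
    simp only [Prod.mk.injEq] at hh
    obtain ⟨h1, h2⟩ := hh
    subst h2
    simp only [add_right_inj] at h1
    simp [h1]
  have hsg : Summable g := by
    rw [← Function.Injective.summable_iff hφ]
    · apply hsf.congr
      rintro ⟨i, k⟩
      simp only [hg, hf, Function.comp_apply]
      rw [if_pos (Nat.le_add_right i k)]
      push_cast
      ring_nf
    · rintro ⟨n, i⟩ hni
      by_cases hin : i ≤ n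
      · exact absurd ⟨(i, n - i), by simp [Nat.add_sub_cancel' hin]⟩ hni
      · simp [hg, hin]
  have hg0 : ∀ u, 0 ≤ g u := by
    rintro ⟨n, i⟩
    simp only [hg]
    split
    · exact mul_nonneg (ha _) (Real.rpow_nonneg (by positivity) _)
    · exact le_refl 0
  have hmarg : Summable fun n : ℕ => ∑' i, g (n, i) :=
    ((summable_prod_of_nonneg hg0).mp hsg).2
  apply hmarg.congr
  intro n
  have hne : ((n:ℝ) + 1) ≠ 0 := by positivity
  have htsum : ∑' i, g (n, i) = ∑ i ∈ range (n+1), a i * ((n:ℝ) + 1) ^ (-(1+q)) := by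
    rw [tsum_eq_sum (s := range (n+1))]
    · apply Finset.sum_congr rfl
      intro i hi
      simp only [hg]
      rw [if_pos (Nat.lt_succ_iff.mp (mem_range.mp hi))]
    · intro i hi
      have : ¬ (i ≤ n) := fun hle => hi (mem_range.mpr (Nat.lt_succ_of_le hle))
      simp [hg, this]
  rw [htsum, ← Finset.sum_mul]
  rw [Real.rpow_neg (by positivity), Real.rpow_add (by positivity), Real.rpow_one]
  field_simp

/-- Pointwise bound: `∑ₙ min(t/(n+1)^(1/p), 1) ≤ 1 + K t^p`. -/
lemma minsum (p : ℝ) (hp : 0 < p) (hp1 : p < 1) (t : ℝ) (ht : 0 ≤ t) :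
    Summable (fun n : ℕ => min (t / ((n:ℝ) + 1) ^ (1/p)) 1) ∧
      ∑' n : ℕ, min (t / ((n:ℝ) + 1) ^ (1/p)) 1 ≤ 1 + (2 + 1/(1/p - 1)) * t ^ p := by
  have hq : 1 < 1/p := one_lt_one_div hp hp1
  set q : ℝ := 1/p with hqdef
  set r : ℝ := q - 1 with hrdef
  have hr : 0 < r := by simp only [hrdef]; linarith
  rcases eq_or_lt_of_le ht with h0 | ht'
  · -- t = 0
    have hz : (fun n : ℕ => min (t / ((n:ℝ) + 1) ^ q) 1) = fun _ => (0:ℝ) := by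
      funext n
      rw [← h0, zero_div, min_eq_left zero_le_one]
    rw [hz]
    refine ⟨summable_zero, ?_⟩
    rw [tsum_zero, ← h0, Real.zero_rpow hp.ne']
    have : (0:ℝ) ≤ 1/(q-1) := by positivity
    simp only [mul_zero, add_zero]
    norm_num
  · set m : ℕ := ⌈t ^ p⌉₊ with hm
    set v : ℕ → ℝ := fun n => if n < m then 1 else t * ((n:ℝ) + 1) ^ (-q) with hv
    have htp : 0 < t ^ p := Real.rpow_pos_of_pos ht' p
    have hm1 : (m:ℝ) < t ^ p + 1 := Nat.ceil_lt_add_one htp.le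
    have hm2 : t ^ p ≤ (m:ℝ) + 1 := le_trans (Nat.le_ceil _) (by linarith)
    have hub : ∀ n : ℕ, min (t / ((n:ℝ) + 1) ^ q) 1 ≤ v n := by
      intro n
      simp only [hv]
      split
      · exact min_le_right _ _
      · refine le_trans (min_le_left _ _) ?_
        rw [Real.rpow_neg (by positivity), div_eq_mul_inv]
    have hshift : ∀ n : ℕ, v (n + m) = t * (((m:ℝ) + n + 1) ^ (-(1 + r))) := by
      intro n
      simp only [hv]
      rw [if_neg (by omega)]
      push_cast
      rw [show -(1 + r) = -q by simp only [hrdef]; ring]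
      ring_nf
    have hsv : Summable v := by
      rw [← summable_nat_add_iff m]
      exact ((tail_summable r hr m).mul_left t).congr (fun n => (hshift n).symm)
    have hvnn : ∀ n, (0:ℝ) ≤ v n := by
      intro n
      simp only [hv]; split
      · norm_num
      · positivity
    have hmin_nn : ∀ n : ℕ, (0:ℝ) ≤ min (t / ((n:ℝ) + 1) ^ q) 1 :=
      fun n => le_min (by positivity) zero_le_one
    have hsum : Summable (fun n : ℕ => min (t / ((n:ℝ) + 1) ^ q) 1) :=
      Summable.of_nonneg_of_le hmin_nn hub hsv
    refine ⟨hsum, ?_⟩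
    have key : t * ((m:ℝ) + 1) ^ (-r) ≤ t ^ p := by
      have h1 : ((m:ℝ) + 1) ^ (-r) ≤ (t ^ p) ^ (-r) :=
        Real.rpow_le_rpow_of_nonpos htp hm2 (by linarith)
      have h2 : (t ^ p) ^ (-r) = t ^ (p * (-r)) := (Real.rpow_mul ht p (-r)).symm
      have h3 : t * t ^ (p * (-r)) = t ^ (1 + p * (-r)) := by
        rw [Real.rpow_add ht' 1 (p * (-r)), Real.rpow_one]
      have h4 : 1 + p * (-r) = p := by
        simp only [hrdef, hqdef]
        field_simp
        ring
      calc t * ((m:ℝ) + 1) ^ (-r) ≤ t * (t ^ p) ^ (-r) :=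
            mul_le_mul_of_nonneg_left h1 ht
        _ = t ^ (1 + p * (-r)) := by rw [h2, h3]
        _ = t ^ p := by rw [h4]
    have htv : ∑' n : ℕ, min (t / ((n:ℝ) + 1) ^ q) 1 ≤ ∑' n, v n :=
      Summable.tsum_le_tsum hub hsum hsv
    have hvt : ∑' n, v n ≤ (t ^ p + 1) + (1 + 1/r) * t ^ p := by
      rw [← Summable.sum_add_tsum_nat_add m hsv]
      have hA : ∑ i ∈ range m, v i = (m:ℝ) := by
        have hone : ∀ i ∈ range m, v i = 1 := fun i hi => by simp [hv, mem_range.mp hi]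
        rw [Finset.sum_congr rfl hone, Finset.sum_const, card_range, nsmul_eq_mul, mul_one]
      have hB : ∑' n : ℕ, v (n + m) ≤ (1 + 1/r) * t ^ p := by
        calc ∑' n : ℕ, v (n + m) = t * ∑' n : ℕ, ((m:ℝ) + n + 1) ^ (-(1 + r)) := by
              rw [← tsum_mul_left]
              exact tsum_congr hshift
          _ ≤ t * ((1 + 1/r) * ((m:ℝ) + 1) ^ (-r)) :=
              mul_le_mul_of_nonneg_left (tail_tsum_le r hr m) ht
          _ = (1 + 1/r) * (t * ((m:ℝ) + 1) ^ (-r)) := by ring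
          _ ≤ (1 + 1/r) * t ^ p := by
              have : (0:ℝ) ≤ 1 + 1/r := by positivity
              exact mul_le_mul_of_nonneg_left key this
      rw [hA]
      linarith
    have : (t ^ p + 1) + (1 + 1/r) * t ^ p = 1 + (2 + 1/r) * t ^ p := by ring
    simp only [hrdef, hqdef] at *
    linarith

/-- A.s. summability of `∑ |X_n|/(n+1)^(1/p)` for identically distributed `X_n`
with `E|X₀|^p < ∞`, `0 < p < 1`. -/
lemma as_summable {Ω : Type*} [MeasureSpace Ω] [IsProbabilityMeasure (volume : Measure Ω)]
    (p : ℝ) (hp : 0 < p) (hp1 : p < 1)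
    (X : ℕ → Ω → ℝ) (hmeas : ∀ n, Measurable (X n))
    (hident : ∀ n, IdentDistrib (X n) (X 0) volume volume)
    (hmom : Integrable (fun ω => |X 0 ω| ^ p) volume) :
    ∀ᵐ ω ∂(volume : Measure Ω),
      Summable (fun n : ℕ => |X n ω| / ((n : ℝ) + 1) ^ (1/p)) := by
  set q : ℝ := 1/p with hqdef
  set K : ℝ := 2 + 1/(q - 1) with hKdef
  have hq : 1 < q := one_lt_one_div hp hp1
  have hK : 0 < K := by
    have hq1 : 0 < q - 1 := by linarith
    have : 0 < 1/(q-1) := by positivity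
    simp only [hKdef]; linarith
  set F : ℕ → ℝ → ℝ := fun n x => min (|x| / ((n:ℝ) + 1) ^ q) 1 with hF
  have hFc : ∀ n, Continuous (F n) := fun n =>
    ((continuous_abs.div_const _).min continuous_const)
  have hFm : ∀ n, Measurable (F n) := fun n => (hFc n).measurable
  have hFnn : ∀ n x, 0 ≤ F n x := fun n x => le_min (by positivity) zero_le_one
  -- the dominating function
  set G : ℝ → ℝ := fun x => 1 + K * |x| ^ p with hG
  have hGm : Measurable G :=
    (measurable_const.add (((Real.continuous_rpow_const hp.le).comp
      continuous_abs).measurable.const_mul K))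
  have hGbound : ∀ x : ℝ, ∑' n : ℕ, ENNReal.ofReal (F n x) ≤ ENNReal.ofReal (G x) := by
    intro x
    obtain ⟨hs, hb⟩ := minsum p hp hp1 |x| (abs_nonneg x)
    rw [← ENNReal.ofReal_tsum_of_nonneg (fun n => hFnn n x) hs]
    exact ENNReal.ofReal_le_ofReal hb
  set μ : Measure ℝ := Measure.map (X 0) volume with hμ
  have hmeasn : ∀ n : ℕ, Measurable fun ω => ENNReal.ofReal (F n (X n ω)) :=
    fun n => Measurable.ennreal_ofReal (by exact (hFm n).comp (hmeas n))
  have hfin : ∫⁻ ω, ∑' n, ENNReal.ofReal (F n (X n ω)) ∂(volume : Measure Ω) ≠ ⊤ := by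
    rw [lintegral_tsum (fun n => (hmeasn n).aemeasurable)]
    have heach : ∀ n, ∫⁻ ω, ENNReal.ofReal (F n (X n ω)) ∂(volume : Measure Ω)
        = ∫⁻ x, ENNReal.ofReal (F n x) ∂μ := by
      intro n
      rw [hμ, ← (hident n).map_eq, lintegral_map (hFm n).ennreal_ofReal (hmeas n)]
    rw [tsum_congr heach,
      ← lintegral_tsum (fun n => (hFm n).ennreal_ofReal.aemeasurable)]
    have hle : ∫⁻ x, ∑' n, ENNReal.ofReal (F n x) ∂μ ≤ ∫⁻ x, ENNReal.ofReal (G x) ∂μ :=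
      lintegral_mono hGbound
    refine ne_top_of_le_ne_top ?_ hle
    rw [hμ, lintegral_map hGm.ennreal_ofReal (hmeas 0)]
    have hsplit : ∀ ω : Ω, ENNReal.ofReal (G (X 0 ω)) =
        ENNReal.ofReal 1 + ENNReal.ofReal K * ENNReal.ofReal (|X 0 ω| ^ p) := by
      intro ω
      rw [hG]
      rw [ENNReal.ofReal_add zero_le_one (by positivity), ENNReal.ofReal_mul hK.le]
    simp only [hsplit]
    have habs : Measurable fun ω : Ω => ENNReal.ofReal (|X 0 ω| ^ p) :=
      Measurable.ennreal_ofReal (by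
        exact ((Real.continuous_rpow_const hp.le).comp continuous_abs).measurable.comp (hmeas 0))
    rw [lintegral_add_left measurable_const, lintegral_const,
      lintegral_const_mul _ habs]
    have h1 : ∫⁻ ω, ENNReal.ofReal (|X 0 ω| ^ p) ∂(volume : Measure Ω) < ⊤ :=
      lt_of_le_of_lt (lintegral_ofReal_le_lintegral_enorm _) hmom.hasFiniteIntegral
    refine ENNReal.add_ne_top.mpr ⟨?_, ?_⟩
    · finiteness
    · exact ENNReal.mul_ne_top ENNReal.ofReal_ne_top h1.ne
  have hae := ae_lt_top (Measurable.ennreal_tsum hmeasn) hfin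
  filter_upwards [hae] with ω hω
  have hsmin : Summable (fun n : ℕ => F n (X n ω)) := by
    have := ENNReal.summable_toReal hω.ne
    exact this.congr (fun n => ENNReal.toReal_ofReal (hFnn n (X n ω)))
  have hev : ∀ᶠ n in Filter.atTop, F n (X n ω) < 1 :=
    hsmin.tendsto_atTop_zero.eventually_lt_const one_pos
  obtain ⟨N, hN⟩ := Filter.eventually_atTop.mp hev
  rw [← summable_nat_add_iff N]
  refine ((summable_nat_add_iff N).mpr hsmin).congr (fun n => ?_)
  have hlt : F (n + N) (X (n + N) ω) < 1 := hN (n + N) (Nat.le_add_left N n)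
  have hlt' : |X (n + N) ω| / (((n + N : ℕ):ℝ) + 1) ^ q < 1 := by
    by_contra hcon
    push_neg at hcon
    rw [hF] at hlt
    simp only [min_eq_right hcon] at hlt
    exact lt_irrefl 1 hlt
  simp only [hF]
  exact min_eq_left hlt'.le


/-- If `{X_n}` are i.i.d. real random variables with `E|X₁|^p < ∞`, `0 < p < 1`, then
`∑_{n≥1} (1/n)(|S_n|/n^{1/p}) < ∞` almost surely. -/
theorem stmt_17 {Ω : Type*} [MeasureSpace Ω] [IsProbabilityMeasure (volume : Measure Ω)]
    (p : ℝ) (hp : 0 < p) (hp1 : p < 1)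
    (X : ℕ → Ω → ℝ) (hmeas : ∀ n, Measurable (X n))
    (hindep : iIndepFun X volume)
    (hident : ∀ n, IdentDistrib (X n) (X 0) volume volume)
    (hmom : Integrable (fun ω => |X 0 ω| ^ p) volume) :
    ∀ᵐ ω ∂(volume : Measure Ω),
      Summable (fun n : ℕ =>
        (1 / ((n : ℝ) + 1)) *
          (|∑ i ∈ Finset.range (n + 1), X i ω| / ((n : ℝ) + 1) ^ (1 / p))) := by
  have hq : 1 < 1/p := one_lt_one_div hp hp1
  filter_upwards [as_summable p hp hp1 X hmeas hident hmom] with ω hω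
  have hdet := det_lemma (1/p) hq (fun i => |X i ω|) (fun i => abs_nonneg _) hω
  refine Summable.of_nonneg_of_le (fun n => by positivity) (fun n => ?_) hdet
  have habs : |∑ i ∈ Finset.range (n + 1), X i ω| ≤ ∑ i ∈ Finset.range (n + 1), |X i ω| :=
    Finset.abs_sum_le_sum_abs _ _
  gcongr
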